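/- The linear span inside End(P_k) of the set {ρ(g) : g a symmetric 2 × 2 real matrix} is a subspace of dimension (k+1)(k+2)/2. -/

import Mathlib

set_option synthInstance.maxHeartbeats 400000
set_option maxHeartbeats 400000

noncomputable section

open MvPolynomial
open Finset

/-- `P_k`: the space of homogeneous polynomials of degree `k` in the two variables
`X = X 0` and `Y = X 1`, with basis the monomials `X^i Y^{k-i}`, `0 ≤ i ≤ k`. -/
def Pk (k : ℕ) : Submodule ℝ (MvPolynomial (Fin 2) ℝ) :=
  homogeneousSubmodule (Fin 2) ℝ k

/-- The substitution homomorphism `p(X, Y) ↦ p(aX + bY, cX + dY)`. -/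
def substHom (a b c d : ℝ) : MvPolynomial (Fin 2) ℝ →ₐ[ℝ] MvPolynomial (Fin 2) ℝ :=
  aeval ![C a * X 0 + C b * X 1, C c * X 0 + C d * X 1]

lemma substHom_mem (k : ℕ) (a b c d : ℝ) :
    ∀ p ∈ Pk k, substHom a b c d p ∈ Pk k := by
  intro p hp
  rw [Pk, mem_homogeneousSubmodule] at hp ⊢
  have hg : ∀ i : Fin 2,
      ((![C a * X 0 + C b * X 1, C c * X 0 + C d * X 1] : Fin 2 → MvPolynomial (Fin 2) ℝ) i).IsHomogeneous 1 := by
    intro i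
    fin_cases i <;>
      exact ((isHomogeneous_X ℝ _).C_mul _).add ((isHomogeneous_X ℝ _).C_mul _)
  simpa [substHom] using hp.aeval _ hg

/-- `ρ(g) : P_k → P_k`, the linear map sending `p(X, Y)` to `p(aX + bY, cX + dY)` for
`g = [[a, b], [c, d]]`. -/
def rhoEnd (k : ℕ) (a b c d : ℝ) : Module.End ℝ (Pk k) :=
  LinearMap.restrict (substHom a b c d).toLinearMap (substHom_mem k a b c d)

/-! ### Auxiliary development -/

instance instACG (k : ℕ) (p : Submodule ℝ (Module.End ℝ (Pk k))) : AddCommGroup ↥p :=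
  @Submodule.addCommGroup ℝ (Module.End ℝ (Pk k)) _ _ _ p

instance instMod (k : ℕ) (p : Submodule ℝ (Module.End ℝ (Pk k))) : Module ℝ ↥p :=
  @Submodule.module ℝ (Module.End ℝ (Pk k)) _ _ _ p


/-- the monomial `X^i Y^(k-i)`. -/
def eP (k i : ℕ) : MvPolynomial (Fin 2) ℝ := X 0 ^ i * X 1 ^ (k - i)

lemma eP_mem (k i : ℕ) (hi : i ≤ k) : eP k i ∈ Pk k := by
  rw [Pk, mem_homogeneousSubmodule]
  have := (isHomogeneous_X_pow (R := ℝ) (0 : Fin 2) i).mul (isHomogeneous_X_pow (R := ℝ) (1 : Fin 2) (k - i))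
  rwa [Nat.add_sub_cancel' hi] at this

/-- `eP`s as elements of `Pk k`. -/
def eV (k : ℕ) (i : Fin (k + 1)) : Pk k := ⟨eP k i, eP_mem k i (Nat.lt_succ_iff.mp i.2)⟩

/-- the index finset. -/
def Sk (k : ℕ) : Finset (ℕ × ℕ) :=
  (range (k + 1) ×ˢ range (k + 1)).filter (fun pq => pq.1 + pq.2 ≤ k)

/-- coefficient family. -/
def hF (k : ℕ) (p q : ℕ) : Fin (k + 1) → MvPolynomial (Fin 2) ℝ := fun i =>
  if p ≤ (i : ℕ) ∧ (i : ℕ) ≤ p + q then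
    ((Nat.choose i p : ℝ) * (Nat.choose (k - i) (p + q - i) : ℝ)) •
      (X 0 ^ (2 * p + q - i) * X 1 ^ (k - (2 * p + q - i)))
  else 0

/-- the coordinates map. -/
def Jmap (k : ℕ) : Module.End ℝ (Pk k) →ₗ[ℝ] (Fin (k + 1) → MvPolynomial (Fin 2) ℝ) where
  toFun T := fun i => ((T (eV k i) : Pk k) : MvPolynomial (Fin 2) ℝ)
  map_add' T S := by ext i; simp
  map_smul' r T := by ext i; simp

lemma card_Sk (k : ℕ) : (Sk k).card = (k + 1) * (k + 2) / 2 := by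
  have hS : Sk k = (range (k + 1)).biUnion (fun n => Finset.HasAntidiagonal.antidiagonal n) := by
    ext ⟨p, q⟩
    simp only [Sk, Finset.mem_filter, Finset.mem_product, Finset.mem_range,
      Finset.mem_biUnion, Finset.HasAntidiagonal.mem_antidiagonal]
    constructor
    · rintro ⟨⟨-, -⟩, h⟩; exact ⟨p + q, by omega, rfl⟩
    · rintro ⟨n, hn, rfl⟩; omega
  have hdisj : ∀ x ∈ range (k + 1), ∀ y ∈ range (k + 1), x ≠ y →
      Disjoint (Finset.HasAntidiagonal.antidiagonal x) (Finset.HasAntidiagonal.antidiagonal y) := by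
    intro x _ y _ hxy
    rw [Finset.disjoint_left]
    rintro ⟨p, q⟩ hp hq
    rw [Finset.HasAntidiagonal.mem_antidiagonal] at hp hq
    omega
  have h2 : ∀ K : ℕ, (∑ n ∈ range (K + 1), (n + 1)) * 2 = (K + 1) * (K + 2) := by
    intro K
    induction K with
    | zero => simp
    | succ n ih => rw [Finset.sum_range_succ, add_mul, ih]; ring
  rw [hS, Finset.card_biUnion hdisj]
  simp only [Finset.Nat.card_antidiagonal]
  have := h2 k
  omega

lemma monomial_eq_smul_eP (k : ℕ) (m : Fin 2 →₀ ℕ) (c : ℝ) (hm : m 0 + m 1 = k) :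
    monomial m c = c • eP k (m 0) := by
  have hprod : (m.prod fun n e => (X n : MvPolynomial (Fin 2) ℝ) ^ e) = X 0 ^ m 0 * X 1 ^ m 1 := by
    rw [Finsupp.prod_fintype _ _ (fun i => pow_zero _), Fin.prod_univ_two]
  rw [monomial_eq, hprod, eP, show k - m 0 = m 1 from by omega,
    smul_eq_C_mul]

lemma degree_two (m : Fin 2 →₀ ℕ) : Finsupp.degree m = m 0 + m 1 := by
  rw [Finsupp.degree, ← Fin.sum_univ_two (fun i => m i)]
  exact Finset.sum_subset (Finset.subset_univ _)
    (fun x _ hx => by simpa using Finsupp.notMem_support_iff.mp hx)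

lemma span_eP : ∀ k, Pk k ≤ Submodule.span ℝ (Set.range fun i : Fin (k+1) => eP k i) := by
  intro k p hp
  rw [Pk, mem_homogeneousSubmodule] at hp
  rw [p.as_sum]
  apply Submodule.sum_mem
  intro m hm
  have hc : coeff m p ≠ 0 := mem_support_iff.mp hm
  have hdeg : m 0 + m 1 = k := by
    have := hp hc
    change Finsupp.weight (fun _ => 1) m = k at this
    rwa [← Finsupp.degree_eq_weight_one, degree_two] at this
  rw [monomial_eq_smul_eP k m _ hdeg]
  exact Submodule.smul_mem _ _ (Submodule.subset_span ⟨⟨m 0, by omega⟩, rfl⟩)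

lemma span_eV (k : ℕ) : Submodule.span ℝ (Set.range (eV k)) = ⊤ := by
  rw [eq_top_iff]
  rw [← Submodule.map_le_map_iff_of_injective (Submodule.injective_subtype (Pk k))]
  rw [Submodule.map_span, Submodule.map_subtype_top]
  have : (Pk k).subtype '' Set.range (eV k) = Set.range fun i : Fin (k+1) => eP k i := by
    rw [← Set.range_comp]; rfl
  rw [this]
  exact span_eP k

lemma Jmap_injective (k : ℕ) : Function.Injective (Jmap k) := by
  intro T S hTS
  apply LinearMap.ext_on (span_eV k)
  rintro x ⟨i, rfl⟩
  have : ((T (eV k i) : Pk k) : MvPolynomial (Fin 2) ℝ) = ((S (eV k i) : Pk k) : MvPolynomial (Fin 2) ℝ) := congrFun hTS i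
  exact Subtype.ext this

/-- the key expansion -/
lemma expand (k : ℕ) (a b d : ℝ) (i : Fin (k + 1)) :
    (C a * X 0 + C b * X 1) ^ (i : ℕ) * (C b * X 0 + C d * X 1) ^ (k - i) =
      ∑ pq ∈ Sk k, (a ^ pq.1 * b ^ pq.2 * d ^ (k - pq.1 - pq.2)) • hF k pq.1 pq.2 i := by
  classical
  have hik : (i : ℕ) ≤ k := Nat.lt_succ_iff.mp i.2
  rw [add_pow, add_pow, Finset.sum_mul_sum, ← Finset.sum_product']
  rw [← Finset.sum_filter_of_ne (s := Sk k)
      (p := fun pq => pq.1 ≤ (i : ℕ) ∧ (i : ℕ) ≤ pq.1 + pq.2)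
      (f := fun pq => (a ^ pq.1 * b ^ pq.2 * d ^ (k - pq.1 - pq.2)) • hF k pq.1 pq.2 i)
      (by
        intro pq _ hne
        by_contra hc
        apply hne
        simp only [hF, if_neg hc, smul_zero])]
  refine Finset.sum_bij' (fun st _ => (st.1, (i : ℕ) - st.1 + st.2))
    (fun pq _ => (pq.1, pq.1 + pq.2 - (i : ℕ))) ?_ ?_ ?_ ?_ ?_
  · rintro ⟨s, t⟩ hst
    simp only [Finset.mem_product, Finset.mem_range] at hst
    simp only [Finset.mem_filter, Sk, Finset.mem_product, Finset.mem_range]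
    refine ⟨⟨⟨by omega, by omega⟩, by omega⟩, by omega, by omega⟩
  · rintro ⟨p, q⟩ hpq
    simp only [Finset.mem_filter, Sk, Finset.mem_product, Finset.mem_range] at hpq
    simp only [Finset.mem_product, Finset.mem_range]
    omega
  · rintro ⟨s, t⟩ hst
    simp only [Finset.mem_product, Finset.mem_range] at hst
    simp only [Prod.mk.injEq]
    exact ⟨trivial, by omega⟩
  · rintro ⟨p, q⟩ hpq
    simp only [Finset.mem_filter, Sk, Finset.mem_product, Finset.mem_range] at hpq
    simp only [Prod.mk.injEq]
    exact ⟨trivial, by omega⟩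
  · rintro ⟨s, t⟩ hst
    simp only [Finset.mem_product, Finset.mem_range] at hst
    have hs : s ≤ (i : ℕ) := by omega
    have ht : t ≤ k - (i : ℕ) := by omega
    have hcond : s ≤ (i : ℕ) ∧ (i : ℕ) ≤ s + ((i : ℕ) - s + t) := ⟨hs, by omega⟩
    simp only [hF, if_pos hcond]
    have e1 : s + ((i : ℕ) - s + t) - (i : ℕ) = t := by omega
    have e2 : 2 * s + ((i : ℕ) - s + t) - (i : ℕ) = s + t := by omega
    have e3 : k - s - ((i : ℕ) - s + t) = k - (i : ℕ) - t := by omega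
    have e4 : k - (s + t) = ((i : ℕ) - s) + (k - (i : ℕ) - t) := by omega
    rw [e1, e2, e3]
    rw [smul_smul, smul_eq_C_mul, e4]
    simp only [map_mul, map_pow, map_natCast]
    ring

lemma Jmap_rho (k : ℕ) (a b c d : ℝ) (i : Fin (k + 1)) :
    Jmap k (rhoEnd k a b c d) i = (C a * X 0 + C b * X 1) ^ (i : ℕ) * (C c * X 0 + C d * X 1) ^ (k - i) := by
  show ((rhoEnd k a b c d (eV k i) : Pk k) : MvPolynomial (Fin 2) ℝ) = _
  unfold rhoEnd
  show substHom a b c d (eP k i) = _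
  rw [eP, map_mul, map_pow, map_pow]
  simp [substHom]

lemma coeff_X0X1 (m n u v : ℕ) :
    coeff (Finsupp.single 0 m + Finsupp.single 1 n)
      (X 0 ^ u * X 1 ^ v : MvPolynomial (Fin 2) ℝ) = if u = m ∧ v = n then 1 else 0 := by
  rw [X_pow_eq_monomial, X_pow_eq_monomial, monomial_mul, coeff_monomial, mul_one]
  by_cases h : u = m ∧ v = n
  · obtain ⟨rfl, rfl⟩ := h; simp
  · rw [if_neg, if_neg h]
    intro heq
    apply h
    constructor
    · have := DFunLike.congr_fun heq (0 : Fin 2)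
      simpa [Finsupp.single_apply] using this
    · have := DFunLike.congr_fun heq (1 : Fin 2)
      simpa [Finsupp.single_apply] using this

lemma coeff_hF (k p q p' q' : ℕ) (hpq : p + q ≤ k) (ip : Fin (k + 1)) (hip : (ip : ℕ) = p) :
    coeff (Finsupp.single 0 (p + q) + Finsupp.single 1 (k - p - q)) (hF k p' q' ip) =
      if p' ≤ p ∧ p ≤ p' + q' ∧ 2 * p' + q' = 2 * p + q then
        ((Nat.choose p p' : ℝ) * (Nat.choose (k - p) (p' + q' - p) : ℝ)) else 0 := by
  subst hip
  rw [hF]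
  by_cases h1 : p' ≤ (ip : ℕ) ∧ (ip : ℕ) ≤ p' + q'
  · rw [if_pos h1, coeff_smul, coeff_X0X1]
    by_cases h2 : 2 * p' + q' = 2 * (ip : ℕ) + q
    · have hcond : 2 * p' + q' - (ip : ℕ) = (ip : ℕ) + q ∧
          k - (2 * p' + q' - (ip : ℕ)) = k - (ip : ℕ) - q := by omega
      rw [if_pos hcond, if_pos ⟨h1.1, h1.2, h2⟩, smul_eq_mul, mul_one]
    · have hcond : ¬(2 * p' + q' - (ip : ℕ) = (ip : ℕ) + q ∧
          k - (2 * p' + q' - (ip : ℕ)) = k - (ip : ℕ) - q) := by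
        rintro ⟨e1, -⟩
        exact h2 (by omega)
      rw [if_neg hcond, if_neg (by tauto), smul_eq_mul, mul_zero]
  · rw [if_neg h1, coeff_zero, if_neg (by tauto)]

lemma hF_indep (k : ℕ) :
    LinearIndependent ℝ (fun pq : (Sk k : Set (ℕ × ℕ)) => hF k pq.1.1 pq.1.2) := by
  rw [Fintype.linearIndependent_iff]
  intro c hc
  suffices H : ∀ n, ∀ s : (Sk k : Set (ℕ × ℕ)), s.1.1 = n → c s = 0 by
    intro s; exact H s.1.1 s rfl
  intro n
  induction n using Nat.strong_induction_on with
  | _ n IH =>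
    rintro ⟨⟨p, q⟩, hs⟩ hn
    simp only at hn
    subst hn
    have hmem : (p, q) ∈ Sk k := Finset.mem_coe.mp hs
    have hpk : p + q ≤ k := by
      simp only [Sk, Finset.mem_filter] at hmem
      exact hmem.2
    set ip : Fin (k + 1) := ⟨p, by omega⟩ with hip
    have h1 := congrFun hc ip
    rw [Finset.sum_apply] at h1
    simp only [Pi.smul_apply, Pi.zero_apply] at h1
    have h2 := congrArg (coeff (Finsupp.single 0 (p + q) + Finsupp.single 1 (k - p - q))) h1
    rw [coeff_sum, coeff_zero] at h2
    simp only [coeff_smul] at h2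
    rw [Finset.sum_eq_single (⟨(p, q), hs⟩ : (Sk k : Set (ℕ × ℕ)))] at h2
    · rw [coeff_hF k p q p q hpk ip rfl, if_pos ⟨le_refl p, by omega, rfl⟩,
        Nat.choose_self, Nat.cast_one, one_mul] at h2
      have hch : ((k - p).choose (p + q - p) : ℝ) ≠ 0 := by
        rw [show p + q - p = q from by omega]
        exact_mod_cast (Nat.choose_pos (by omega : q ≤ k - p)).ne'
      rw [smul_eq_mul, mul_eq_zero] at h2
      tauto
    · rintro ⟨⟨p', q'⟩, hs'⟩ - hne
      have hmem' : (p', q') ∈ Sk k := Finset.mem_coe.mp hs'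
      have hp'k : p' + q' ≤ k := by
        simp only [Sk, Finset.mem_filter] at hmem'
        exact hmem'.2
      by_cases hlt : p' < p
      · rw [IH p' hlt ⟨(p', q'), hs'⟩ rfl, zero_smul]
      · rw [coeff_hF k p q p' q' hpk ip rfl, if_neg, smul_zero]
        rintro ⟨hle, -, heq⟩
        have hpp : p' = p := le_antisymm hle (by omega)
        have hqq : q' = q := by omega
        exact hne (by simp [hpp, hqq])
    · intro hnotmem
      exact absurd (Finset.mem_univ _) hnotmem

lemma Jrho_eq_sum (k : ℕ) (a b d : ℝ) :
    Jmap k (rhoEnd k a b b d) =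
      ∑ pq ∈ Sk k, (a ^ pq.1 * b ^ pq.2 * d ^ (k - pq.1 - pq.2)) • hF k pq.1 pq.2 := by
  funext i
  rw [Jmap_rho k a b b d i, expand k a b d i, Finset.sum_apply]
  simp only [Pi.smul_apply]

lemma coeff3 (c : ℝ) (p q r m n l : ℕ) :
    coeff (Finsupp.single 0 m + Finsupp.single 1 n + Finsupp.single 2 l)
      (C c * X 0 ^ p * X 1 ^ q * X 2 ^ r : MvPolynomial (Fin 3) ℝ) =
      if p = m ∧ q = n ∧ r = l then c else 0 := by
  have hmono : (C c * X 0 ^ p * X 1 ^ q * X 2 ^ r : MvPolynomial (Fin 3) ℝ) =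
      monomial (Finsupp.single 0 p + Finsupp.single 1 q + Finsupp.single 2 r) c := by
    rw [X_pow_eq_monomial, X_pow_eq_monomial, X_pow_eq_monomial, C_apply,
      monomial_mul, monomial_mul, monomial_mul]
    rw [mul_one, mul_one, mul_one, zero_add]
  rw [hmono, coeff_monomial]
  by_cases h : p = m ∧ q = n ∧ r = l
  · obtain ⟨rfl, rfl, rfl⟩ := h; simp
  · rw [if_neg, if_neg h]
    intro heq
    apply h
    refine ⟨?_, ?_, ?_⟩
    · have := DFunLike.congr_fun heq (0 : Fin 3)
      simpa [Finsupp.single_apply] using this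
    · have := DFunLike.congr_fun heq (1 : Fin 3)
      simpa [Finsupp.single_apply] using this
    · have := DFunLike.congr_fun heq (2 : Fin 3)
      simpa [Finsupp.single_apply] using this

lemma span_eq (k : ℕ) :
    Submodule.map (Jmap k) (Submodule.span ℝ {T : Module.End ℝ (Pk k) | ∃ a b d : ℝ, T = rhoEnd k a b b d}) =
      Submodule.span ℝ (Set.range fun pq : (Sk k : Set (ℕ × ℕ)) => hF k pq.1.1 pq.1.2) := by
  rw [Submodule.map_span]
  apply le_antisymm
  · rw [Submodule.span_le]
    rintro x ⟨T, ⟨a, b, d, rfl⟩, rfl⟩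
    rw [SetLike.mem_coe, Jrho_eq_sum]
    apply Submodule.sum_mem
    rintro ⟨p, q⟩ hpq
    exact Submodule.smul_mem _ _
      (Submodule.subset_span ⟨⟨(p, q), Finset.mem_coe.mpr hpq⟩, rfl⟩)
  · rw [Submodule.span_le]
    rintro x ⟨⟨⟨p₀, q₀⟩, hmem⟩, rfl⟩
    simp only [SetLike.mem_coe]
    by_contra hnot
    obtain ⟨f, hf0, hfbot⟩ := Submodule.exists_dual_map_eq_bot_of_notMem hnot inferInstance
    have hval : ∀ a b d : ℝ, f (Jmap k (rhoEnd k a b b d)) = 0 := by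
      intro a b d
      have hx : Jmap k (rhoEnd k a b b d) ∈
          Submodule.span ℝ (Jmap k '' {T : Module.End ℝ (Pk k) | ∃ a b d : ℝ, T = rhoEnd k a b b d}) :=
        Submodule.subset_span ⟨rhoEnd k a b b d, ⟨a, b, d, rfl⟩, rfl⟩
      have h' : f (Jmap k (rhoEnd k a b b d)) ∈ Submodule.map f
          (Submodule.span ℝ (Jmap k '' {T : Module.End ℝ (Pk k) | ∃ a b d : ℝ, T = rhoEnd k a b b d})) :=
        Submodule.mem_map_of_mem hx
      rw [hfbot] at h'
      exact (Submodule.mem_bot ℝ).mp h'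
    set P : MvPolynomial (Fin 3) ℝ :=
      ∑ pq ∈ Sk k, C (f (hF k pq.1 pq.2)) * X 0 ^ pq.1 * X 1 ^ pq.2 * X 2 ^ (k - pq.1 - pq.2) with hP
    have hPeval : ∀ v : Fin 3 → ℝ, eval v P = eval v (0 : MvPolynomial (Fin 3) ℝ) := by
      intro v
      have h := hval (v 0) (v 1) (v 2)
      rw [Jrho_eq_sum, map_sum] at h
      simp only [map_smul, smul_eq_mul] at h
      rw [hP, map_zero, map_sum, ← h]
      apply Finset.sum_congr rfl
      intro pq _
      simp only [map_mul, map_pow, eval_C, eval_X]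
      ring
    have hP0 : P = 0 := MvPolynomial.funext hPeval
    have hcoe := congrArg
      (coeff (Finsupp.single 0 p₀ + Finsupp.single 1 q₀ + Finsupp.single 2 (k - p₀ - q₀))) hP0
    rw [coeff_zero, hP, coeff_sum] at hcoe
    rw [Finset.sum_eq_single (p₀, q₀)] at hcoe
    · rw [coeff3, if_pos ⟨rfl, rfl, rfl⟩] at hcoe
      exact hf0 hcoe
    · rintro ⟨p, q⟩ hpq hne
      rw [coeff3, if_neg]
      rintro ⟨rfl, rfl, -⟩
      exact hne rfl
    · intro hn
      exact absurd (Finset.mem_coe.mp hmem) hn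

/-- The linear span, inside `End(P_k)`, of the maps `ρ(g)` for `g` a
symmetric `2 × 2` real matrix, has dimension `(k+1)(k+2)/2`. -/
theorem statement11 (k : ℕ) :
    Set.finrank ℝ {T : Module.End ℝ (Pk k) | ∃ a b d : ℝ, T = rhoEnd k a b b d} =
      (k + 1) * (k + 2) / 2 := by
  rw [show Set.finrank ℝ {T : Module.End ℝ (Pk k) | ∃ a b d : ℝ, T = rhoEnd k a b b d} =
      Module.finrank ℝ (Submodule.span ℝ {T : Module.End ℝ (Pk k) | ∃ a b d : ℝ, T = rhoEnd k a b b d}) from rfl]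
  have h1 := LinearEquiv.finrank_eq (Submodule.equivMapOfInjective (Jmap k) (Jmap_injective k)
      (Submodule.span ℝ {T : Module.End ℝ (Pk k) | ∃ a b d : ℝ, T = rhoEnd k a b b d}))
  rw [h1, span_eq k, finrank_span_eq_card (hF_indep k)]
  simp [card_Sk k]
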